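/- arXiv:2406.06063 — 2 statements merged into one kernel-verified Lean document; each statement's English description precedes it below -/
import Mathlib

section
/- For positive integers b and j with 1 ≤ j ≤ b, the normalized tail of binomial coefficients satisfies (∑_{i=j+1}^{b} C(2b, b+i)) / 2^{2b} ≤ e^{−j²/b}. -/
open Finset

/-- Chernoff-type bound on the tail of the symmetric binomial distribution:
`(∑_{i=j+1}^{b} C(2b, b+i)) / 2^{2b} ≤ e^{−j²/b}` for `1 ≤ j ≤ b`. -/
theorem stmt7 (b j : ℕ) (hj1 : 1 ≤ j) (hjb : j ≤ b) :
    (∑ i ∈ Finset.Icc (j + 1) b, ((2 * b).choose (b + i) : ℝ)) / 2 ^ (2 * b) ≤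
      Real.exp (-(j : ℝ) ^ 2 / (b : ℝ)) := by
  have hb : 1 ≤ b := le_trans hj1 hjb
  have hb0 : (0:ℝ) < b := by exact_mod_cast Nat.pos_of_ne_zero (by omega)
  set t : ℝ := j / b with ht
  have ht0 : 0 ≤ t := by positivity
  -- binomial theorem
  have hbin : ∑ k ∈ Finset.range (2*b+1), ((2*b).choose k : ℝ) * Real.exp (2*t*k) =
      (Real.exp (2*t) + 1) ^ (2*b) := by
    rw [add_pow]
    refine Finset.sum_congr rfl fun k hk => ?_
    rw [one_pow, mul_one, mul_comm (2*t) (k:ℝ), Real.exp_nat_mul]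
    ring
  -- step 1: tail sum bounded by exponential moment
  have key : (∑ i ∈ Finset.Icc (j + 1) b, ((2 * b).choose (b + i) : ℝ)) ≤
      Real.exp (-(2*t)*((b:ℝ)+j)) * (Real.exp (2*t) + 1) ^ (2*b) := by
    rw [← hbin, Finset.mul_sum]
    calc ∑ i ∈ Finset.Icc (j + 1) b, ((2 * b).choose (b + i) : ℝ)
        ≤ ∑ i ∈ Finset.Icc (j + 1) b,
            Real.exp (-(2*t)*((b:ℝ)+j)) * (((2*b).choose (b+i) : ℝ) * Real.exp (2*t*((b:ℝ)+i))) := by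
          refine Finset.sum_le_sum fun i hi => ?_
          obtain ⟨hi1, hi2⟩ := Finset.mem_Icc.mp hi
          have hji : (j:ℝ) ≤ i := by exact_mod_cast le_trans (Nat.le_succ j) hi1
          have h1 : (1:ℝ) ≤ Real.exp (-(2*t)*((b:ℝ)+j)) * Real.exp (2*t*((b:ℝ)+i)) := by
            rw [← Real.exp_add]
            rw [Real.one_le_exp_iff]
            nlinarith
          calc ((2 * b).choose (b + i) : ℝ) = ((2 * b).choose (b + i) : ℝ) * 1 := by ring
            _ ≤ ((2 * b).choose (b + i) : ℝ) *
                (Real.exp (-(2*t)*((b:ℝ)+j)) * Real.exp (2*t*((b:ℝ)+i))) := by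
                exact mul_le_mul_of_nonneg_left h1 (by positivity)
            _ = Real.exp (-(2*t)*((b:ℝ)+j)) * (((2*b).choose (b+i) : ℝ) * Real.exp (2*t*((b:ℝ)+i))) := by
                ring
      _ = ∑ k ∈ Finset.Icc (b + (j + 1)) (b + b),
            Real.exp (-(2*t)*((b:ℝ)+j)) * (((2*b).choose k : ℝ) * Real.exp (2*t*(k:ℝ))) := by
          rw [← Finset.map_add_left_Icc, Finset.sum_map]
          refine Finset.sum_congr rfl fun i hi => ?_
          simp [addLeftEmbedding, Nat.cast_add]
      _ ≤ ∑ k ∈ Finset.range (2*b+1),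
            Real.exp (-(2*t)*((b:ℝ)+j)) * (((2*b).choose k : ℝ) * Real.exp (2*t*(k:ℝ))) := by
          refine Finset.sum_le_sum_of_subset_of_nonneg ?_ fun k _ _ => by positivity
          intro k hk
          rw [Finset.mem_Icc] at hk
          rw [Finset.mem_range]
          omega
  -- step 2: arithmetic
  rw [div_le_iff₀ (by positivity)]
  refine key.trans ?_
  have hcosh : Real.exp (2*t) + 1 = 2 * Real.exp t * Real.cosh t := by
    rw [Real.cosh_eq]
    have h1 : Real.exp (2*t) = Real.exp t * Real.exp t := by
      rw [← Real.exp_add]; ring_nf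
    have h2 : Real.exp t * Real.exp (-t) = 1 := by
      rw [← Real.exp_add]; simp
    field_simp
    linarith
  rw [hcosh]
  have hch : Real.cosh t ^ (2*b) ≤ Real.exp (t^2/2) ^ (2*b) :=
    pow_le_pow_left₀ (zero_le_one.trans (Real.one_le_cosh t)) (Real.cosh_le_exp_half_sq t) _
  calc Real.exp (-(2*t)*((b:ℝ)+j)) * (2 * Real.exp t * Real.cosh t) ^ (2*b)
      = Real.exp (-(2*t)*((b:ℝ)+j)) * Real.exp t ^ (2*b) * Real.cosh t ^ (2*b) * 2^(2*b) := by
        rw [mul_pow, mul_pow]; ring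
    _ ≤ Real.exp (-(2*t)*((b:ℝ)+j)) * Real.exp t ^ (2*b) * Real.exp (t^2/2) ^ (2*b) * 2^(2*b) := by
        have : (0:ℝ) ≤ Real.exp (-(2*t)*((b:ℝ)+j)) * Real.exp t ^ (2*b) := by positivity
        have h2b : (0:ℝ) ≤ (2:ℝ)^(2*b) := by positivity
        nlinarith [hch, this, h2b, mul_le_mul_of_nonneg_left hch this]
    _ = Real.exp (-(2*t)*((b:ℝ)+j) + (2*b:ℕ)*t + (2*b:ℕ)*(t^2/2)) * 2^(2*b) := by
        rw [← Real.exp_nat_mul, ← Real.exp_nat_mul, ← Real.exp_add, ← Real.exp_add]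
    _ = Real.exp (-(j:ℝ)^2 / b) * 2^(2*b) := by
        congr 1
        rw [ht]
        push_cast
        field_simp
        ring
end

section
/- Let b and j₀ be positive integers with j₀ ≤ b, and let x ∈ [−1,1]. Then the truncation error of the Chebyshev expansion satisfies |4 ∑_{j=j₀+1}^{b} (−1)^j [(∑_{i=j+1}^{b} C(2b,b+i))/2^{2b}] T_{2j−1}(x)| ≤ 4 b e^{−j₀²/b}. -/
open Polynomial Finset

lemma T_abs_le (n : ℤ) (x : ℝ) (hx : x ∈ Set.Icc (-1 : ℝ) 1) :
    |(Polynomial.Chebyshev.T ℝ n).eval x| ≤ 1 := by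
  obtain ⟨h1, h2⟩ := hx
  have : x = Real.cos (Real.arccos x) := (Real.cos_arccos h1 h2).symm
  rw [this, Polynomial.Chebyshev.T_real_cos]
  exact Real.abs_cos_le_one _

lemma chernoff (b t : ℕ) (hb : 1 ≤ b) :
    (∑ i ∈ Finset.Icc t b, ((2 * b).choose (b + i) : ℝ)) ≤
      4 ^ b * Real.exp (-(t : ℝ) ^ 2 / b) := by
  have hb0 : (0 : ℝ) < b := by exact_mod_cast hb
  obtain ⟨l, hl⟩ : ∃ l : ℝ, l = 2 * t / b := ⟨_, rfl⟩
  have hl0 : 0 ≤ l := by rw [hl]; positivity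
  have step1 : (∑ i ∈ Finset.Icc t b, ((2 * b).choose (b + i) : ℝ)) ≤
      ∑ i ∈ Finset.Icc t b,
        Real.exp (-(l * (b + t))) * (((2 * b).choose (b + i) : ℝ) * Real.exp (l * (b + i))) := by
    apply Finset.sum_le_sum
    intro i hi
    rw [Finset.mem_Icc] at hi
    have hit : (t : ℝ) ≤ i := by exact_mod_cast hi.1
    rw [mul_comm (Real.exp _), mul_assoc, ← Real.exp_add]
    have h1 : (1 : ℝ) ≤ Real.exp (l * (b + i) + -(l * (b + t))) := by
      rw [← Real.exp_zero]
      apply Real.exp_le_exp.2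
      nlinarith
    nlinarith [(by positivity : (0:ℝ) ≤ ((2 * b).choose (b + i) : ℝ))]
  rw [← Finset.mul_sum] at step1
  have step2 : (∑ i ∈ Finset.Icc t b, ((2 * b).choose (b + i) : ℝ) * Real.exp (l * (b + i))) ≤
      ∑ k ∈ Finset.range (2 * b + 1), ((2 * b).choose k : ℝ) * Real.exp (l * k) := by
    have himg : (∑ i ∈ Finset.Icc t b, ((2 * b).choose (b + i) : ℝ) * Real.exp (l * (b + i))) =
        ∑ k ∈ (Finset.Icc t b).image (fun i => b + i),
          ((2 * b).choose k : ℝ) * Real.exp (l * k) := by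
      rw [Finset.sum_image (by intros a _ c _ h; simp only at h; omega)]
      simp only [Nat.cast_add]
    rw [himg]
    apply Finset.sum_le_sum_of_subset_of_nonneg
    · intro k hk
      simp only [Finset.mem_image, Finset.mem_Icc, Finset.mem_range] at *
      omega
    · intros; positivity
  have binom : (∑ k ∈ Finset.range (2 * b + 1), ((2 * b).choose k : ℝ) * Real.exp (l * k)) =
      (Real.exp l + 1) ^ (2 * b) := by
    rw [add_pow]
    apply Finset.sum_congr rfl
    intro k hk
    rw [one_pow, mul_comm l (k : ℝ), Real.exp_nat_mul]
    ring
  have cosh_bound : Real.exp l + 1 ≤ 2 * Real.exp (l / 2) * Real.exp (l ^ 2 / 8) := by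
    have h1 : Real.exp l + 1 = Real.exp (l / 2) * (2 * Real.cosh (l / 2)) := by
      rw [Real.cosh_eq]
      rw [show Real.exp (l/2) * (2 * ((Real.exp (l/2) + Real.exp (-(l/2)))/2)) =
        Real.exp (l/2) * Real.exp (l/2) + Real.exp (l/2) * Real.exp (-(l/2)) by ring,
        ← Real.exp_add, ← Real.exp_add]
      norm_num
    have h2 : Real.cosh (l / 2) ≤ Real.exp ((l / 2) ^ 2 / 2) := Real.cosh_le_exp_half_sq _
    have h3 : Real.exp ((l / 2) ^ 2 / 2) = Real.exp (l ^ 2 / 8) := by ring_nf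
    rw [h1]
    nlinarith [Real.exp_pos (l / 2)]
  have pow_bound : (Real.exp l + 1) ^ (2 * b) ≤
      4 ^ b * Real.exp ((2 * b : ℕ) * (l / 2 + l ^ 2 / 8)) := by
    calc (Real.exp l + 1) ^ (2 * b) ≤ (2 * Real.exp (l / 2) * Real.exp (l ^ 2 / 8)) ^ (2 * b) := by
          apply pow_le_pow_left₀ (by positivity) cosh_bound
      _ = 4 ^ b * Real.exp ((2 * b : ℕ) * (l / 2 + l ^ 2 / 8)) := by
          rw [mul_pow, mul_pow, ← Real.exp_nat_mul, ← Real.exp_nat_mul, mul_assoc, ← Real.exp_add,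
            show (2:ℝ) ^ (2 * b) = 4 ^ b by rw [pow_mul]; norm_num]
          congr 1
          push_cast
          ring
  have final : Real.exp (-(l * (b + t))) * (4 ^ b * Real.exp ((2 * b : ℕ) * (l / 2 + l ^ 2 / 8))) =
      4 ^ b * Real.exp (-(t : ℝ) ^ 2 / b) := by
    rw [mul_comm (Real.exp _), mul_assoc, ← Real.exp_add]
    congr 2
    have hbne : (b : ℝ) ≠ 0 := ne_of_gt hb0
    rw [hl]
    push_cast
    field_simp
    ring
  calc (∑ i ∈ Finset.Icc t b, ((2 * b).choose (b + i) : ℝ))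
      ≤ Real.exp (-(l * (b + t))) *
          ∑ i ∈ Finset.Icc t b, ((2 * b).choose (b + i) : ℝ) * Real.exp (l * (b + i)) := step1
    _ ≤ Real.exp (-(l * (b + t))) * (Real.exp l + 1) ^ (2 * b) := by
        rw [← binom]; exact mul_le_mul_of_nonneg_left step2 (Real.exp_pos _).le
    _ ≤ Real.exp (-(l * (b + t))) * (4 ^ b * Real.exp ((2 * b : ℕ) * (l / 2 + l ^ 2 / 8))) :=
        mul_le_mul_of_nonneg_left pow_bound (Real.exp_pos _).le
    _ = 4 ^ b * Real.exp (-(t : ℝ) ^ 2 / b) := final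

/-- Truncation error of the Chebyshev expansion:
`|4 ∑_{j=j₀+1}^{b} (−1)^j [(∑_{i=j+1}^b C(2b,b+i))/2^{2b}] T_{2j−1}(x)| ≤ 4 b e^{−j₀²/b}`. -/
theorem stmt8 (b j₀ : ℕ) (hj₀ : 1 ≤ j₀) (hj₀b : j₀ ≤ b)
    (x : ℝ) (hx : x ∈ Set.Icc (-1 : ℝ) 1) :
    |4 * ∑ j ∈ Finset.Icc (j₀ + 1) b,
        (-1 : ℝ) ^ j *
          ((∑ i ∈ Finset.Icc (j + 1) b, ((2 * b).choose (b + i) : ℝ)) / 2 ^ (2 * b)) *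
          (Polynomial.Chebyshev.T ℝ (2 * (j : ℤ) - 1)).eval x| ≤
      4 * (b : ℝ) * Real.exp (-(j₀ : ℝ) ^ 2 / (b : ℝ)) := by
  have hb : 1 ≤ b := le_trans hj₀ hj₀b
  have hb0 : (0 : ℝ) < b := by exact_mod_cast hb
  have h4 : (2 : ℝ) ^ (2 * b) = 4 ^ b := by rw [pow_mul]; norm_num
  have key : ∀ j ∈ Finset.Icc (j₀ + 1) b,
      |(-1 : ℝ) ^ j *
          ((∑ i ∈ Finset.Icc (j + 1) b, ((2 * b).choose (b + i) : ℝ)) / 2 ^ (2 * b)) *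
          (Polynomial.Chebyshev.T ℝ (2 * (j : ℤ) - 1)).eval x| ≤
        Real.exp (-(j₀ : ℝ) ^ 2 / b) := by
    intro j hj
    rw [Finset.mem_Icc] at hj
    have hsum_nonneg : (0 : ℝ) ≤ ∑ i ∈ Finset.Icc (j + 1) b, ((2 * b).choose (b + i) : ℝ) := by
      positivity
    have hc : (0 : ℝ) ≤ (∑ i ∈ Finset.Icc (j + 1) b, ((2 * b).choose (b + i) : ℝ)) / 2 ^ (2 * b) := by
      positivity
    rw [abs_mul, abs_mul, abs_pow, abs_neg, abs_one, one_pow, one_mul, abs_of_nonneg hc]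
    have hT := T_abs_le (2 * (j : ℤ) - 1) x hx
    have htail : (∑ i ∈ Finset.Icc (j + 1) b, ((2 * b).choose (b + i) : ℝ)) ≤
        4 ^ b * Real.exp (-((j + 1 : ℕ) : ℝ) ^ 2 / b) := chernoff b (j + 1) hb
    have hmono : Real.exp (-((j + 1 : ℕ) : ℝ) ^ 2 / b) ≤ Real.exp (-(j₀ : ℝ) ^ 2 / b) := by
      apply Real.exp_le_exp.2
      rw [div_le_div_iff₀ hb0 hb0]
      · have : (j₀ : ℝ) ≤ ((j + 1 : ℕ) : ℝ) := by exact_mod_cast Nat.le_succ_of_le (le_trans (Nat.le_succ j₀) hj.1)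
        have hsq : (j₀:ℝ)^2 ≤ ((j+1:ℕ):ℝ)^2 := by
          nlinarith [(by positivity : (0:ℝ) ≤ (j₀:ℝ))]
        nlinarith [mul_le_mul_of_nonneg_right hsq hb0.le]

    calc (∑ i ∈ Finset.Icc (j + 1) b, ((2 * b).choose (b + i) : ℝ)) / 2 ^ (2 * b) *
          |(Polynomial.Chebyshev.T ℝ (2 * (j : ℤ) - 1)).eval x|
        ≤ (∑ i ∈ Finset.Icc (j + 1) b, ((2 * b).choose (b + i) : ℝ)) / 2 ^ (2 * b) * 1 :=
          mul_le_mul_of_nonneg_left hT hc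
      _ ≤ Real.exp (-(j₀ : ℝ) ^ 2 / b) := by
          rw [mul_one, h4, div_le_iff₀ (by positivity)]
          calc (∑ i ∈ Finset.Icc (j + 1) b, ((2 * b).choose (b + i) : ℝ))
              ≤ 4 ^ b * Real.exp (-((j + 1 : ℕ) : ℝ) ^ 2 / b) := htail
            _ ≤ 4 ^ b * Real.exp (-(j₀ : ℝ) ^ 2 / b) := by
                exact mul_le_mul_of_nonneg_left hmono (by positivity)
            _ = Real.exp (-(j₀ : ℝ) ^ 2 / b) * 4 ^ b := by ring
  rw [abs_mul, abs_of_nonneg (by norm_num : (0:ℝ) ≤ 4)]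
  have habs : |∑ j ∈ Finset.Icc (j₀ + 1) b,
      (-1 : ℝ) ^ j *
        ((∑ i ∈ Finset.Icc (j + 1) b, ((2 * b).choose (b + i) : ℝ)) / 2 ^ (2 * b)) *
        (Polynomial.Chebyshev.T ℝ (2 * (j : ℤ) - 1)).eval x| ≤
      (Finset.Icc (j₀ + 1) b).card * Real.exp (-(j₀ : ℝ) ^ 2 / b) := by
    calc _ ≤ ∑ j ∈ Finset.Icc (j₀ + 1) b, |(-1 : ℝ) ^ j *
        ((∑ i ∈ Finset.Icc (j + 1) b, ((2 * b).choose (b + i) : ℝ)) / 2 ^ (2 * b)) *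
        (Polynomial.Chebyshev.T ℝ (2 * (j : ℤ) - 1)).eval x| := Finset.abs_sum_le_sum_abs _ _
      _ ≤ ∑ _j ∈ Finset.Icc (j₀ + 1) b, Real.exp (-(j₀ : ℝ) ^ 2 / b) := Finset.sum_le_sum key
      _ = (Finset.Icc (j₀ + 1) b).card * Real.exp (-(j₀ : ℝ) ^ 2 / b) := by
          rw [Finset.sum_const, nsmul_eq_mul]
  have hcard : ((Finset.Icc (j₀ + 1) b).card : ℝ) ≤ b := by
    rw [Nat.card_Icc]
    have : b + 1 - (j₀ + 1) ≤ b := by omega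
    exact_mod_cast this
  calc 4 * |∑ j ∈ Finset.Icc (j₀ + 1) b, _| ≤
      4 * ((Finset.Icc (j₀ + 1) b).card * Real.exp (-(j₀ : ℝ) ^ 2 / b)) := by
        exact mul_le_mul_of_nonneg_left habs (by norm_num)
    _ ≤ 4 * (b : ℝ) * Real.exp (-(j₀ : ℝ) ^ 2 / b) := by
        rw [mul_assoc]
        have := Real.exp_pos (-(j₀ : ℝ) ^ 2 / b)
        nlinarith
end
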